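/- Let Γ : L = ⊕_{j∈J} L_j be a fine group grading of a finite-dimensional complex Lie algebra L, let 𝐉 be an involutive antiautomorphism of L with real form L_𝐉, and suppose that for each j ∈ J there exist elements Z_{j,1},…,Z_{j,l_j} ∈ L_j such that (Z_{j,1},…,Z_{j,l_j}) is a ℂ-basis of L_j and 𝐉(Z_{j,l}) = Z_{j,l} for all l. Then the decomposition Γ^𝐉 : L_𝐉 = ⊕_{j∈J} L_j^ℝ, where L_j^ℝ = span_ℝ{Z_{j,1},…,Z_{j,l_j}}, is a fine group grading of the real Lie algebra L_𝐉. -/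

import Mathlib

variable {L : Type} [LieRing L] [LieAlgebra ℂ L]

/-- A complex Lie algebra is in particular a real vector space (restriction of scalars). -/
noncomputable instance realModuleOfComplex : Module ℝ L :=
  Module.compHom L (algebraMap ℝ ℂ)

/-- A group grading of the complex Lie algebra `L` by an abelian group `G`. -/
def IsGroupGrading {G : Type} [AddCommGroup G] (ℒ : G → Submodule ℂ L) : Prop :=
  iSupIndep ℒ ∧ (⨆ g, ℒ g) = ⊤ ∧
  ∀ g h : G, ∀ x ∈ ℒ g, ∀ y ∈ ℒ h, ⁅x, y⁆ ∈ ℒ (g + h)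

/-- A fine group grading of `L`: a group grading admitting no proper group refinement. -/
def IsFineGroupGrading {G : Type} [AddCommGroup G] (ℒ : G → Submodule ℂ L) : Prop :=
  IsGroupGrading ℒ ∧
  ∀ (H : Type) [AddCommGroup H], ∀ M : H → Submodule ℂ L,
    IsGroupGrading M → (∀ h, M h ≠ ⊥ → ∃ g, M h ≤ ℒ g) →
    {V : Submodule ℂ L | V ≠ ⊥ ∧ ∃ h, M h = V} = {V : Submodule ℂ L | V ≠ ⊥ ∧ ∃ g, ℒ g = V}

/-- A group grading of the real form `L_Jmap = {x ∈ L : Jmap(x) = x}` by an abelian group `H`: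
a family of real subspaces of `L`, independent, with sum exactly `L_Jmap`, and satisfying
`[M_g, M_h] ⊆ M_{g+h}`. -/
def IsGroupGradingOfRealForm (Jmap : L → L) {H : Type} [AddCommGroup H]
    (M : H → Submodule ℝ L) : Prop :=
  iSupIndep M ∧ ((⨆ h, M h : Submodule ℝ L) : Set L) = {x : L | Jmap x = x} ∧
  ∀ g h : H, ∀ x ∈ M g, ∀ y ∈ M h, ⁅x, y⁆ ∈ M (g + h)

/-- A fine group grading of the real form `L_Jmap`. -/
def IsFineGroupGradingOfRealForm (Jmap : L → L) {H : Type} [AddCommGroup H]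
    (M : H → Submodule ℝ L) : Prop :=
  IsGroupGradingOfRealForm Jmap M ∧
  ∀ (H' : Type) [AddCommGroup H'], ∀ N : H' → Submodule ℝ L,
    IsGroupGradingOfRealForm Jmap N → (∀ h', N h' ≠ ⊥ → ∃ h, N h' ≤ M h) →
    {W : Submodule ℝ L | W ≠ ⊥ ∧ ∃ h', N h' = W} =
      {W : Submodule ℝ L | W ≠ ⊥ ∧ ∃ h, M h = W}

set_option linter.unreachableTactic false
set_option linter.unusedTactic false
set_option linter.unusedSectionVars false
set_option linter.unnecessarySeqFocus false
set_option maxHeartbeats 1000000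

namespace Statement13Aux

lemma rsmul_eq (r : ℝ) (x : L) : r • x = (r : ℂ) • x := rfl

instance : IsScalarTower ℝ ℂ L :=
  ⟨fun r c x => by
    show ((r:ℂ) * c) • x = (r:ℂ) • (c • x)
    rw [mul_smul]⟩

variable {Jmap : L → L}

section
variable (hadd : ∀ x y : L, Jmap (x + y) = Jmap x + Jmap y)
    (hconj : ∀ (c : ℂ) (x : L), Jmap (c • x) = (starRingEnd ℂ) c • Jmap x)

include hconj in
lemma J_zero : Jmap 0 = 0 := by simpa using hconj 0 0

include hconj in
lemma J_rsmul (r : ℝ) (x : L) : Jmap (r • x) = r • Jmap x := by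
  rw [rsmul_eq, hconj, rsmul_eq]; simp

include hadd hconj in
lemma J_fix_spanR {S : Set L} (hS : ∀ z ∈ S, Jmap z = z) :
    ∀ x ∈ Submodule.span ℝ S, Jmap x = x := by
  intro x hx
  induction hx using Submodule.span_induction with
  | mem z hz => exact hS z hz
  | zero => exact J_zero hconj
  | add a b _ _ ha hb => rw [hadd, ha, hb]
  | smul r a _ ha => rw [J_rsmul hconj, ha]

include hadd hconj in
lemma J_mem_spanC {S : Set L} (hS : ∀ z ∈ S, Jmap z = z) :
    ∀ x ∈ Submodule.span ℂ S, Jmap x ∈ Submodule.span ℂ S := by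
  intro x hx
  induction hx using Submodule.span_induction with
  | mem z hz => rw [hS z hz]; exact Submodule.subset_span hz
  | zero => rw [J_zero hconj]; exact Submodule.zero_mem _
  | add a b _ _ ha hb => rw [hadd]; exact Submodule.add_mem _ ha hb
  | smul c a _ ha => rw [hconj]; exact Submodule.smul_mem _ _ ha

/-- decomposition of an element of a complex span into real and imaginary parts -/
lemma spanC_decomp {S : Set L} :
    ∀ x ∈ Submodule.span ℂ S, ∃ a ∈ Submodule.span ℝ S, ∃ b ∈ Submodule.span ℝ S,
      x = a + Complex.I • b := by
  intro x hx
  induction hx using Submodule.span_induction with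
  | mem z hz =>
      exact ⟨z, Submodule.subset_span hz, 0, Submodule.zero_mem _, by simp⟩
  | zero => exact ⟨0, Submodule.zero_mem _, 0, Submodule.zero_mem _, by simp⟩
  | add u v _ _ hu hv =>
      obtain ⟨a, ha, b, hb, rfl⟩ := hu
      obtain ⟨a', ha', b', hb', rfl⟩ := hv
      exact ⟨a + a', Submodule.add_mem _ ha ha', b + b', Submodule.add_mem _ hb hb', by
        simp only [smul_add]; abel⟩
  | smul c u _ hu =>
      obtain ⟨a, ha, b, hb, rfl⟩ := hu
      refine ⟨c.re • a - c.im • b, sub_mem (Submodule.smul_mem _ _ ha) (Submodule.smul_mem _ _ hb),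
        c.im • a + c.re • b, add_mem (Submodule.smul_mem _ _ ha) (Submodule.smul_mem _ _ hb), ?_⟩
      simp only [rsmul_eq]
      match_scalars <;> ring_nf <;> simp [Complex.ext_iff] <;> ring_nf <;> norm_num

include hadd hconj in
/-- a `Jmap`-fixed element of the complex span of fixed vectors lies in the real span -/
lemma mem_spanR_of_fix {S : Set L} (hS : ∀ z ∈ S, Jmap z = z) {x : L}
    (hx : x ∈ Submodule.span ℂ S) (hfix : Jmap x = x) : x ∈ Submodule.span ℝ S := by
  obtain ⟨a, ha, b, hb, rfl⟩ := spanC_decomp _ hx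
  have hJa : Jmap a = a := J_fix_spanR hadd hconj hS a ha
  have hJb : Jmap b = b := J_fix_spanR hadd hconj hS b hb
  have h2 : Jmap (a + Complex.I • b) = a - Complex.I • b := by
    rw [hadd, hconj, hJa, hJb]
    simp [sub_eq_add_neg]
  rw [h2] at hfix
  have hb0 : b = 0 := by
    have h4 : ((2:ℂ) * Complex.I) • b = (a + Complex.I • b) - (a - Complex.I • b) := by
      match_scalars <;> ring
    rw [← hfix, sub_self] at h4
    rcases smul_eq_zero.mp h4 with h | h
    · exfalso; simp [Complex.ext_iff] at h
    · exact h
  subst hb0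
  simpa using ha

include hadd hconj in
/-- the fixed points of `Jmap` form a real submodule -/
def fixSubmodule : Submodule ℝ L where
  carrier := {x | Jmap x = x}
  zero_mem' := J_zero hconj
  add_mem' := by intro a b ha hb; simp only [Set.mem_setOf_eq] at *; rw [hadd, ha, hb]
  smul_mem' := by intro r a ha; simp only [Set.mem_setOf_eq] at *; rw [J_rsmul hconj, ha]

variable (hinv : ∀ x : L, Jmap (Jmap x) = x)

include hadd hconj hinv in
/-- every element decomposes as `u + I•v` with fixed `u, v` -/
lemma fix_decomp (x : L) : ∃ u v : L, Jmap u = u ∧ Jmap v = v ∧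
    x = u + Complex.I • v := by
  refine ⟨((1:ℂ)/2) • (x + Jmap x), (-Complex.I/2) • (x - Jmap x), ?_, ?_, ?_⟩
  · rw [hconj, hadd, hinv]
    rw [show (starRingEnd ℂ) ((1:ℂ)/2) = (1:ℂ)/2 by simp [Complex.ext_iff]]
    rw [add_comm]
  · have hsub : Jmap (x - Jmap x) = Jmap x - x := by
      have hneg : ∀ z : L, Jmap (-z) = -Jmap z := fun z => by simpa using hconj (-1) z
      rw [sub_eq_add_neg, hadd, hneg, hinv, sub_eq_add_neg]
    rw [hconj, hsub]
    rw [show (starRingEnd ℂ) (-Complex.I/2) = Complex.I/2 by rw [map_div₀, map_ofNat]; simp [Complex.ext_iff]]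
    match_scalars <;> ring
  · match_scalars <;> ring_nf <;> simp [Complex.ext_iff] <;> ring_nf <;> norm_num

end

section DS
variable {G : Type} (A : G → Submodule ℂ L) (Jmap : L → L)

/-- `Jmap` restricted to each graded component, as an `AddMonoidHom`. -/
def Jcomp (hJ0 : Jmap 0 = 0) (hadd : ∀ x y : L, Jmap (x + y) = Jmap x + Jmap y)
    (hJmem : ∀ g, ∀ x ∈ A g, Jmap x ∈ A g) (g : G) : A g →+ A g where
  toFun y := ⟨Jmap y, hJmem g y y.2⟩
  map_zero' := Subtype.ext hJ0
  map_add' x y := Subtype.ext (hadd x y)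

lemma coe_mapRange [DecidableEq G] (hJ0 : Jmap 0 = 0)
    (hadd : ∀ x y : L, Jmap (x + y) = Jmap x + Jmap y)
    (hJmem : ∀ g, ∀ x ∈ A g, Jmap x ∈ A g) (f : DirectSum G fun g => A g) :
    DirectSum.coeAddMonoidHom A
      (DFinsupp.mapRange.addMonoidHom (Jcomp A Jmap hJ0 hadd hJmem) f)
      = Jmap (DirectSum.coeAddMonoidHom A f) := by
  induction f using DirectSum.induction_on with
  | zero => simp [hJ0]
  | of i y =>
      have h1 : (DFinsupp.mapRange.addMonoidHom (Jcomp A Jmap hJ0 hadd hJmem)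
          (DirectSum.of (fun g => A g) i y))
          = DirectSum.of (fun g => A g) i (Jcomp A Jmap hJ0 hadd hJmem i y) :=
        DFinsupp.mapRange_single (hf := fun i => map_zero _)
      rw [h1, DirectSum.coeAddMonoidHom_of, DirectSum.coeAddMonoidHom_of]
      rfl
  | add f g hf hg =>
      rw [map_add, map_add, map_add, hf, hg, hadd]

end DS

end Statement13Aux

namespace Statement13Aux

section Main
variable {G : Type} (ℒ : G → Submodule ℂ L) (Z : G → Set L)
  (hZsub : ∀ g, Z g ⊆ ℒ g)

include hZsub in
lemma spanR_le (g : G) : Submodule.span ℝ (Z g) ≤ (ℒ g).restrictScalars ℝ :=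
  Submodule.span_le.mpr (hZsub g)

include hZsub in
lemma indep_spanR (hind : iSupIndep ℒ) :
    iSupIndep (fun g => Submodule.span ℝ (Z g)) := by
  intro g
  rw [Submodule.disjoint_def]
  intro x hx1 hx2
  have h1 : x ∈ ℒ g := spanR_le ℒ Z hZsub g hx1
  have hle : (⨆ (j) (_ : j ≠ g), Submodule.span ℝ (Z j))
      ≤ ((⨆ (j) (_ : j ≠ g), ℒ j)).restrictScalars ℝ := by
    refine iSup₂_le fun j hj => le_trans (spanR_le ℒ Z hZsub j) ?_
    intro y hy
    exact (le_iSup₂ (f := fun (j : G) (_ : j ≠ g) => ℒ j) j hj) hy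
  exact Submodule.disjoint_def.mp (hind g) x h1 (hle hx2)

variable {Jmap : L → L}
variable (hadd : ∀ x y : L, Jmap (x + y) = Jmap x + Jmap y)
    (hconj : ∀ (c : ℂ) (x : L), Jmap (c • x) = (starRingEnd ℂ) c • Jmap x)
    (hZfix : ∀ g, ∀ z ∈ Z g, Jmap z = z)
    (hZspan : ∀ g, Submodule.span ℂ (Z g) = ℒ g)

include hadd hconj hZfix hZspan in
lemma J_mem_comp : ∀ g, ∀ x ∈ ℒ g, Jmap x ∈ ℒ g := by
  intro g
  rw [← hZspan g]
  exact J_mem_spanC hadd hconj (hZfix g)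

include hadd hconj hZfix hZspan in
lemma iSup_spanR_coe (hind : iSupIndep ℒ) (hsup : ⨆ g, ℒ g = ⊤) :
    ((⨆ g, Submodule.span ℝ (Z g) : Submodule ℝ L) : Set L) = {x : L | Jmap x = x} := by
  apply Set.Subset.antisymm
  · have hle : (⨆ g, Submodule.span ℝ (Z g)) ≤ fixSubmodule hadd hconj :=
      iSup_le fun g => Submodule.span_le.mpr (fun z hz => hZfix g z hz)
    exact fun x hx => hle hx
  · intro x hx
    classical
    have hI : DirectSum.IsInternal ℒ :=
      (DirectSum.isInternal_submodule_iff_iSupIndep_and_iSup_eq_top ℒ).mpr ⟨hind, hsup⟩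
    obtain ⟨f, hf⟩ := hI.2 x
    have hJmem := J_mem_comp ℒ Z hadd hconj hZfix hZspan
    have h2 := coe_mapRange ℒ Jmap (J_zero hconj) hadd hJmem f
    rw [hf] at h2
    rw [hx] at h2
    rw [← hf] at h2
    have h3 : DFinsupp.mapRange.addMonoidHom (Jcomp ℒ Jmap (J_zero hconj) hadd hJmem) f = f :=
      hI.1 h2
    have h4 : ∀ g, Jmap (f g : L) = (f g : L) := by
      intro g
      have h5 : (DFinsupp.mapRange.addMonoidHom (Jcomp ℒ Jmap (J_zero hconj) hadd hJmem) f) g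
          = f g := by rw [h3]
      rw [DFinsupp.mapRange.addMonoidHom_apply, DFinsupp.mapRange_apply] at h5
      exact congrArg Subtype.val h5
    have h6 : ∀ g, (f g : L) ∈ Submodule.span ℝ (Z g) := by
      intro g
      refine mem_spanR_of_fix hadd hconj (hZfix g) ?_ (h4 g)
      rw [hZspan g]
      exact (f g).2
    rw [← hf, DirectSum.coeAddMonoidHom_eq_dfinsuppSum]
    refine Submodule.sum_mem _ fun g _ => ?_
    exact (le_iSup (fun g => Submodule.span ℝ (Z g)) g) (h6 g)

include hadd hconj hZsub hZfix hZspan in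
lemma bracket_spanR [AddCommGroup G] (hbr : ∀ x y : L, Jmap ⁅x, y⁆ = ⁅Jmap x, Jmap y⁆)
    (hgr : ∀ g h : G, ∀ x ∈ ℒ g, ∀ y ∈ ℒ h, ⁅x, y⁆ ∈ ℒ (g + h)) :
    ∀ g h : G, ∀ x ∈ Submodule.span ℝ (Z g), ∀ y ∈ Submodule.span ℝ (Z h),
      ⁅x, y⁆ ∈ Submodule.span ℝ (Z (g + h)) := by
  intro g h x hx y hy
  have hxL : x ∈ ℒ g := spanR_le ℒ Z hZsub g hx
  have hyL : y ∈ ℒ h := spanR_le ℒ Z hZsub h hy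
  have hfx : Jmap x = x := J_fix_spanR hadd hconj (hZfix g) x hx
  have hfy : Jmap y = y := J_fix_spanR hadd hconj (hZfix h) y hy
  have hbmem : ⁅x, y⁆ ∈ ℒ (g + h) := hgr g h x hxL y hyL
  have hbfix : Jmap ⁅x, y⁆ = ⁅x, y⁆ := by rw [hbr, hfx, hfy]
  refine mem_spanR_of_fix hadd hconj (hZfix (g + h)) ?_ hbfix
  rw [hZspan (g + h)]
  exact hbmem

end Main

end Statement13Aux

namespace Statement13Aux

section Fine
variable {H' : Type} (N : H' → Submodule ℝ L) {Jmap : L → L}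
variable (hadd : ∀ x y : L, Jmap (x + y) = Jmap x + Jmap y)
    (hconj : ∀ (c : ℂ) (x : L), Jmap (c • x) = (starRingEnd ℂ) c • Jmap x)

include hadd hconj in
lemma spanC_submodule_decomp (W : Submodule ℝ L) {x : L}
    (hx : x ∈ Submodule.span ℂ (W : Set L)) :
    ∃ a ∈ W, ∃ b ∈ W, x = a + Complex.I • b := by
  obtain ⟨a, ha, b, hb, rfl⟩ := spanC_decomp _ hx
  rw [Submodule.span_eq W] at ha hb
  exact ⟨a, ha, b, hb, rfl⟩

include hadd hconj in
lemma indep_complexified (hNind : iSupIndep N) (hNfix : ∀ k, ∀ x ∈ N k, Jmap x = x) :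
    iSupIndep (fun k => Submodule.span ℂ (N k : Set L)) := by
  intro k
  rw [Submodule.disjoint_def]
  intro x hx1 hx2
  set V : Submodule ℝ L := ⨆ (j) (_ : j ≠ k), N j with hV
  have hVfix : ∀ y ∈ V, Jmap y = y := by
    have hle : V ≤ fixSubmodule hadd hconj :=
      iSup₂_le fun j _ => fun y hy => hNfix j y hy
    exact fun y hy => hle hy
  have hx2' : x ∈ Submodule.span ℂ (V : Set L) := by
    have hle : (⨆ (j) (_ : j ≠ k), Submodule.span ℂ (N j : Set L))
        ≤ Submodule.span ℂ (V : Set L) := by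
      refine iSup₂_le fun j hj => Submodule.span_mono ?_
      intro y hy
      exact (le_iSup₂ (f := fun (j : H') (_ : j ≠ k) => N j) j hj) hy
    exact hle hx2
  obtain ⟨a, ha, b, hb, hab⟩ := spanC_submodule_decomp hadd hconj (N k) hx1
  obtain ⟨a', ha', b', hb', hab'⟩ := spanC_submodule_decomp hadd hconj V hx2'
  have hfa : Jmap a = a := hNfix k a ha
  have hfb : Jmap b = b := hNfix k b hb
  have hfa' : Jmap a' = a' := hVfix a' ha'
  have hfb' : Jmap b' = b' := hVfix b' hb'
  -- from a + I b = a' + I b' deduce a = a' and b = b'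
  have key : a = a' ∧ b = b' := by
    have heq : a + Complex.I • b = a' + Complex.I • b' := by rw [← hab, ← hab']
    have hw : a - a' = Complex.I • (b' - b) := by
      rw [smul_sub, sub_eq_sub_iff_add_eq_add, heq, add_comm]
    have hJw : Jmap (a - a') = a - a' := by
      have hneg : ∀ z : L, Jmap (-z) = -Jmap z := fun z => by simpa using hconj (-1) z
      rw [sub_eq_add_neg, hadd, hneg, hfa, hfa', ← sub_eq_add_neg]
    have hJw' : Jmap (Complex.I • (b' - b)) = -(Complex.I • (b' - b)) := by
      have hneg : ∀ z : L, Jmap (-z) = -Jmap z := fun z => by simpa using hconj (-1) z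
      rw [hconj]
      rw [sub_eq_add_neg, hadd, hneg, hfb, hfb', ← sub_eq_add_neg]
      simp
    rw [hw, hJw'] at hJw
    have hw0 : Complex.I • (b' - b) = 0 := by
      have h2 : (2:ℂ) • (Complex.I • (b' - b)) = 0 := by
        rw [two_smul]
        nth_rewrite 1 [← hJw]
        simp
      rcases smul_eq_zero.mp h2 with h | h
      · norm_num at h
      · exact h
    have hbb : b' = b := by
      rcases smul_eq_zero.mp hw0 with h | h
      · exact absurd h Complex.I_ne_zero
      · exact sub_eq_zero.mp h
    have haa : a = a' := by
      rw [hbb, sub_self, smul_zero] at hw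
      exact sub_eq_zero.mp hw
    exact ⟨haa, hbb.symm⟩
  have ha0 : a = 0 := Submodule.disjoint_def.mp (hNind k) a ha (key.1 ▸ ha')
  have hb0 : b = 0 := Submodule.disjoint_def.mp (hNind k) b hb (key.2 ▸ hb')
  rw [hab, ha0, hb0, smul_zero, add_zero]

include hadd hconj in
lemma sup_complexified (hinv : ∀ x : L, Jmap (Jmap x) = x)
    (hNsup : ((⨆ k, N k : Submodule ℝ L) : Set L) = {x : L | Jmap x = x}) :
    (⨆ k, Submodule.span ℂ (N k : Set L)) = ⊤ := by
  rw [eq_top_iff]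
  intro x _
  obtain ⟨u, v, hu, hv, rfl⟩ := fix_decomp hadd hconj hinv x
  have hle : (⨆ k, N k : Submodule ℝ L)
      ≤ (⨆ k, Submodule.span ℂ (N k : Set L)).restrictScalars ℝ := by
    refine iSup_le fun k => ?_
    intro z hz
    exact (le_iSup (fun k => Submodule.span ℂ (N k : Set L)) k) (Submodule.subset_span hz)
  have hmem : ∀ w : L, Jmap w = w → w ∈ ⨆ k, Submodule.span ℂ (N k : Set L) := by
    intro w hw
    have : w ∈ ((⨆ k, N k : Submodule ℝ L) : Set L) := by rw [hNsup]; exact hw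
    exact hle this
  exact Submodule.add_mem _ (hmem u hu) (Submodule.smul_mem _ _ (hmem v hv))

lemma bracket_complexified [AddCommGroup H']
    (hNbr : ∀ g h : H', ∀ x ∈ N g, ∀ y ∈ N h, ⁅x, y⁆ ∈ N (g + h)) :
    ∀ g h : H', ∀ x ∈ Submodule.span ℂ (N g : Set L), ∀ y ∈ Submodule.span ℂ (N h : Set L),
      ⁅x, y⁆ ∈ Submodule.span ℂ (N (g + h) : Set L) := by
  intro g h x hx y hy
  induction hy using Submodule.span_induction with
  | mem z hz =>
      induction hx using Submodule.span_induction with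
      | mem w hw => exact Submodule.subset_span (hNbr g h w hw z hz)
      | zero => simp
      | add u v _ _ hu hv => rw [add_lie]; exact Submodule.add_mem _ hu hv
      | smul c u _ hu => rw [smul_lie]; exact Submodule.smul_mem _ _ hu
  | zero => simp
  | add u v _ _ hu hv => rw [lie_add]; exact Submodule.add_mem _ hu hv
  | smul c u _ hu => rw [lie_smul]; exact Submodule.smul_mem _ _ hu

end Fine

end Statement13Aux


/-- the `fundamental' method: let `Γ : L = ⊕_{j∈J} L_j` be a fine group
grading of a finite-dimensional complex Lie algebra `L`, let `Jmap` be an involutive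
antiautomorphism of `L` (conjugate-linear, bracket-preserving, and an involution), and
suppose every grading subspace `L_j` has a ℂ-basis `Z_j` consisting of `Jmap`-fixed
elements.  Then the real spans `L_j^ℝ = span_ℝ Z_j` form a fine group grading `Γ^Jmap` of
the real form `L_Jmap = {x ∈ L : Jmap(x) = x}`. -/
theorem statement13 (L : Type) [LieRing L] [LieAlgebra ℂ L] [FiniteDimensional ℂ L]
    (G : Type) [AddCommGroup G] (ℒ : G → Submodule ℂ L)
    (hfine : IsFineGroupGrading ℒ)
    (Jmap : L → L)
    (hadd : ∀ x y : L, Jmap (x + y) = Jmap x + Jmap y)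
    (hconj : ∀ (c : ℂ) (x : L), Jmap (c • x) = (starRingEnd ℂ) c • Jmap x)
    (hbr : ∀ x y : L, Jmap ⁅x, y⁆ = ⁅Jmap x, Jmap y⁆)
    (hinv : ∀ x : L, Jmap (Jmap x) = x)
    (Z : G → Set L)
    (hZsub : ∀ g, Z g ⊆ ℒ g)
    (hZfix : ∀ g, ∀ z ∈ Z g, Jmap z = z)
    (hZind : ∀ g, LinearIndependent ℂ ((↑) : Z g → L))
    (hZspan : ∀ g, Submodule.span ℂ (Z g) = ℒ g) :
    IsFineGroupGradingOfRealForm Jmap (fun g => Submodule.span ℝ (Z g)) := by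
  classical
  obtain ⟨⟨hind, hsup, hgr⟩, hfinestep⟩ := hfine
  open Statement13Aux in
  refine ⟨⟨indep_spanR ℒ Z hZsub hind,
      iSup_spanR_coe ℒ Z hadd hconj hZfix hZspan hind hsup,
      bracket_spanR ℒ Z hZsub hadd hconj hZfix hZspan hbr hgr⟩, ?_⟩
  intro H' _ N hN hNref
  obtain ⟨hNind, hNsup, hNbr⟩ := hN
  have hNfix : ∀ k, ∀ x ∈ N k, Jmap x = x := by
    intro k x hx
    have h1 : x ∈ ((⨆ k, N k : Submodule ℝ L) : Set L) := (le_iSup N k) hx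
    rw [hNsup] at h1
    exact h1
  set M : H' → Submodule ℂ L := fun k => Submodule.span ℂ (N k : Set L) with hM
  have hMgr : IsGroupGrading M :=
    ⟨indep_complexified N hadd hconj hNind hNfix,
     sup_complexified N hadd hconj hinv hNsup,
     bracket_complexified N hNbr⟩
  have hMref : ∀ k, M k ≠ ⊥ → ∃ g, M k ≤ ℒ g := by
    intro k hk
    have hNk : N k ≠ ⊥ := by
      intro h0
      apply hk
      simp [hM, h0]
    obtain ⟨g, hg⟩ := hNref k hNk
    refine ⟨g, Submodule.span_le.mpr ?_⟩
    intro z hz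
    exact (spanR_le ℒ Z hZsub g) (hg hz)
  have SE := hfinestep H' M hMgr hMref
  have main : ∀ k g, N k ≠ ⊥ → ℒ g = M k → N k = Submodule.span ℝ (Z g) := by
    intro k g hk hMk
    obtain ⟨g₀, hg₀⟩ := hNref k hk
    have hMle : M k ≤ ℒ g₀ := Submodule.span_le.mpr
      (fun z hz => (spanR_le ℒ Z hZsub g₀) (hg₀ hz))
    have hLgne : ℒ g ≠ ⊥ := by
      obtain ⟨x, hx, hx0⟩ := (Submodule.ne_bot_iff (N k)).mp hk
      intro h0
      have hxM : x ∈ M k := Submodule.subset_span hx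
      rw [← hMk, h0] at hxM
      exact hx0 (by simpa using hxM)
    have hgg : g = g₀ := by
      by_contra hne
      apply hLgne
      have h1 : ℒ g ≤ ⨆ (j) (_ : j ≠ g₀), ℒ j :=
        le_iSup₂ (f := fun (j : G) (_ : j ≠ g₀) => ℒ j) g hne
      have h2 : ℒ g ≤ ℒ g₀ := by rw [hMk]; exact hMle
      rw [eq_bot_iff]
      intro z hz
      exact (Submodule.disjoint_def.mp (hind g₀) z (h2 hz) (h1 hz)) ▸ Submodule.zero_mem ⊥
    subst hgg
    apply le_antisymm hg₀
    intro z hz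
    have hzfix : Jmap z = z := J_fix_spanR hadd hconj (hZfix g) z hz
    have hzM : z ∈ Submodule.span ℂ (N k : Set L) := by
      show z ∈ M k
      rw [← hMk]
      exact (spanR_le ℒ Z hZsub g) hz
    have h3 := mem_spanR_of_fix hadd hconj (fun w hw => hNfix k w hw) hzM hzfix
    rwa [Submodule.span_eq] at h3
  ext W
  simp only [Set.mem_setOf_eq]
  constructor
  · rintro ⟨hW, k, rfl⟩
    have hMk : M k ≠ ⊥ := by
      intro h0
      apply hW
      rw [eq_bot_iff]
      intro z hz
      have h1 : z ∈ M k := Submodule.subset_span hz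
      rw [h0] at h1
      simpa using h1
    have hmem : M k ∈ {V : Submodule ℂ L | V ≠ ⊥ ∧ ∃ h, M h = V} := ⟨hMk, k, rfl⟩
    rw [SE] at hmem
    obtain ⟨hVne, g, hg⟩ := hmem
    exact ⟨hW, g, (main k g hW hg).symm⟩
  · rintro ⟨hW, g, rfl⟩
    have hLg : ℒ g ≠ ⊥ := by
      obtain ⟨x, hx, hx0⟩ := (Submodule.ne_bot_iff _).mp hW
      intro h0
      have h1 : x ∈ ℒ g := spanR_le ℒ Z hZsub g hx
      rw [h0] at h1
      exact hx0 (by simpa using h1)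
    have hmem : ℒ g ∈ {V : Submodule ℂ L | V ≠ ⊥ ∧ ∃ g, ℒ g = V} := ⟨hLg, g, rfl⟩
    rw [← SE] at hmem
    obtain ⟨hVne, k, hk⟩ := hmem
    have hNk : N k ≠ ⊥ := by
      intro h0
      apply hLg
      rw [← hk]
      simp [hM, h0]
    exact ⟨hW, k, main k g hNk hk.symm⟩
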